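/- arXiv:1409.4271 — 2 statements merged into one kernel-verified Lean document; each statement's English description precedes it below -/
import Mathlib

section
/- Let w be in the monotone non-negative cone with w ≠ 0, let τ_i = (Σ_{j=1}^i w_j)^{-1}, and let b^{(i)} ∈ ℝ^n be the vector with first i entries equal to τ_i and the rest zero. Let A be the set of all signed permutations of the vectors b^{(1)},...,b^{(n)}. Then for every x ∈ ℝ^n, the atomic norm ‖x‖_A = inf{t ≥ 0 : x ∈ t·conv(A)} equals Ω_w(x). -/
open Finset Pointwise

/-- The vector of absolute values of x, sorted in non-increasing order. -/
noncomputable def absSorted {n : ℕ} (x : Fin n → ℝ) : Fin n → ℝ :=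
  fun i => |x (Tuple.sort (fun j => -|x j|) i)|

/-- The ordered weighted l1 norm Omega_w(x). -/
noncomputable def owl {n : ℕ} (w x : Fin n → ℝ) : ℝ := ∑ i, w i * absSorted x i

/-- tau_i = (w_1 + ... + w_i)⁻¹ (0-indexed: sum over j ≤ i). -/
noncomputable def tau {n : ℕ} (w : Fin n → ℝ) (i : Fin n) : ℝ :=
  (∑ j ∈ Finset.Iic i, w j)⁻¹

/-- The atom b⁽ⁱ⁾: first i+1 entries equal to tau_i, remaining entries zero. -/
noncomputable def atomVec {n : ℕ} (w : Fin n → ℝ) (i : Fin n) : Fin n → ℝ :=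
  fun j => if j ≤ i then tau w i else 0

/-- The atomic set A: all signed permutations of the atoms b⁽¹⁾, ..., b⁽ⁿ⁾. -/
noncomputable def atomSet {n : ℕ} (w : Fin n → ℝ) : Set (Fin n → ℝ) :=
  { a | ∃ (σ : Equiv.Perm (Fin n)) (s : Fin n → ℝ) (i : Fin n),
      (∀ j, s j = 1 ∨ s j = -1) ∧ a = fun j => s j * atomVec w i (σ j) }

lemma absSorted_nonneg {n : ℕ} (x : Fin n → ℝ) (i : Fin n) : 0 ≤ absSorted x i := abs_nonneg _

lemma absSorted_antitone {n : ℕ} (x : Fin n → ℝ) : Antitone (absSorted x) := by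
  intro i j hij
  have := Tuple.monotone_sort (fun j => -|x j|) hij
  simpa [absSorted] using this

noncomputable def owl' {n : ℕ} (w x : Fin n → ℝ) : ℝ :=
  Finset.univ.sup' ⟨1, Finset.mem_univ 1⟩ (fun σ : Equiv.Perm (Fin n) => ∑ i, w i * |x (σ i)|)

lemma owl_eq_owl' {n : ℕ} (w : Fin n → ℝ) (hmono : Antitone w) (x : Fin n → ℝ) :
    owl w x = owl' w x := by
  apply le_antisymm
  · exact Finset.le_sup' (f := fun σ : Equiv.Perm (Fin n) => ∑ i, w i * |x (σ i)|)
      (Finset.mem_univ (Tuple.sort (fun j => -|x j|)))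
  · apply Finset.sup'_le
    intro σ _
    have hmv : Monovary w (absSorted x) := hmono.monovary (absSorted_antitone x)
    have key := hmv.sum_mul_comp_perm_le_sum_mul (σ := σ.trans (Tuple.sort (fun j => -|x j|)).symm)
    calc ∑ i, w i * |x (σ i)|
        = ∑ i, w i * absSorted x ((σ.trans (Tuple.sort (fun j => -|x j|)).symm) i) := by
          simp [absSorted]
      _ ≤ ∑ i, w i * absSorted x i := key
      _ = owl w x := rfl


lemma term_le_owl' {n : ℕ} (w x : Fin n → ℝ) (σ : Equiv.Perm (Fin n)) :
    ∑ i, w i * |x (σ i)| ≤ owl' w x :=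
  Finset.le_sup' (f := fun σ : Equiv.Perm (Fin n) => ∑ i, w i * |x (σ i)|) (Finset.mem_univ σ)

lemma owl'_le {n : ℕ} {w x : Fin n → ℝ} {t : ℝ}
    (h : ∀ σ : Equiv.Perm (Fin n), ∑ i, w i * |x (σ i)| ≤ t) : owl' w x ≤ t :=
  Finset.sup'_le _ _ (fun σ _ => h σ)

lemma owl'_signperm {n : ℕ} (w : Fin n → ℝ) (σ : Equiv.Perm (Fin n)) (s : Fin n → ℝ)
    (hs : ∀ j, s j = 1 ∨ s j = -1) (x : Fin n → ℝ) :
    owl' w (fun j => s j * x (σ j)) = owl' w x := by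
  have habs : ∀ j, |s j * x (σ j)| = |x (σ j)| := by
    intro j
    rcases hs j with h | h <;> simp [h, abs_mul]
  apply le_antisymm
  · apply owl'_le
    intro π
    calc ∑ i, w i * |s (π i) * x (σ (π i))| = ∑ i, w i * |x ((π.trans σ) i)| := by
          simp only [habs]; rfl
      _ ≤ _ := term_le_owl' w x (π.trans σ)
  · apply owl'_le
    intro π
    calc ∑ i, w i * |x (π i)|
        = ∑ i, w i * |(fun j => s j * x (σ j)) ((π.trans σ.symm) i)| := by
          refine Finset.sum_congr rfl fun i _ => ?_
          simp only [Equiv.trans_apply, Equiv.apply_symm_apply, abs_mul]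
          rcases hs (σ.symm (π i)) with h | h <;> simp [h]
      _ ≤ _ := term_le_owl' w (fun j => s j * x (σ j)) (π.trans σ.symm)

lemma owl'_add_le {n : ℕ} (w : Fin n → ℝ) (hnonneg : ∀ i, 0 ≤ w i) (x y : Fin n → ℝ) :
    owl' w (x + y) ≤ owl' w x + owl' w y := by
  apply owl'_le
  intro σ
  calc ∑ i, w i * |(x + y) (σ i)|
      ≤ ∑ i, (w i * |x (σ i)| + w i * |y (σ i)|) := by
        refine Finset.sum_le_sum fun i _ => ?_
        rw [← mul_add]
        exact mul_le_mul_of_nonneg_left (abs_add_le _ _) (hnonneg i)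
    _ = (∑ i, w i * |x (σ i)|) + ∑ i, w i * |y (σ i)| := Finset.sum_add_distrib
    _ ≤ owl' w x + owl' w y := add_le_add (term_le_owl' w x σ) (term_le_owl' w y σ)

lemma owl'_smul {n : ℕ} (w x : Fin n → ℝ) {c : ℝ} (hc : 0 ≤ c) :
    owl' w (c • x) = c * owl' w x := by
  unfold owl'
  erw [Finset.comp_sup'_eq_sup'_comp (g := fun t => c * t)]
  · congr 1
    funext σ
    show ∑ i, w i * |(c • x) (σ i)| = c * ∑ i, w i * |x (σ i)|
    rw [Finset.mul_sum]
    refine Finset.sum_congr rfl fun i _ => ?_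
    simp only [Pi.smul_apply, smul_eq_mul, abs_mul, abs_of_nonneg hc]
    ring
  · intro a b
    exact (mul_max_of_nonneg a b hc)

lemma absSorted_of_antitone {n : ℕ} {v : Fin n → ℝ} (hv : Antitone v) (h0 : ∀ j, 0 ≤ v j) :
    absSorted v = v := by
  have habs : ∀ j, |v j| = v j := fun j => abs_of_nonneg (h0 j)
  have key : (fun j => -|v j|) ∘ (1 : Equiv.Perm (Fin n)) =
      (fun j => -|v j|) ∘ Tuple.sort (fun j => -|v j|) := by
    rw [Tuple.comp_sort_eq_comp_iff_monotone]
    intro i j hij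
    simp only [Function.comp, Equiv.Perm.coe_one, id_eq, neg_le_neg_iff, habs]
    exact hv hij
  funext i
  have := congrFun key i
  simp only [Function.comp, Equiv.Perm.coe_one, id_eq, neg_inj] at this
  show |v ((Tuple.sort fun j => -|v j|) i)| = v i
  rw [← this, habs]

lemma sum_Iic_pos {n : ℕ} {w : Fin n → ℝ} (hmono : Antitone w)
    (hnonneg : ∀ i, 0 ≤ w i) (hne : w ≠ 0) (i : Fin n) : 0 < ∑ j ∈ Finset.Iic i, w j := by
  obtain ⟨k, hk⟩ : ∃ k, w k ≠ 0 := by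
    by_contra h; push_neg at h; exact hne (funext h)
  set z : Fin n := ⟨0, Nat.pos_of_ne_zero (by rintro rfl; exact k.elim0)⟩ with hz
  have hzk : z ≤ k := by simp [Fin.le_def, hz]
  have hwz : 0 < w z := lt_of_lt_of_le ((hnonneg k).lt_of_ne (Ne.symm hk)) (hmono hzk)
  have hzi : z ∈ Finset.Iic i := Finset.mem_Iic.mpr (by simp [Fin.le_def, hz])
  calc (0:ℝ) < w z := hwz
    _ ≤ ∑ j ∈ Finset.Iic i, w j :=
        Finset.single_le_sum (fun j _ => hnonneg j) hzi

lemma tau_pos {n : ℕ} {w : Fin n → ℝ} (hmono : Antitone w)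
    (hnonneg : ∀ i, 0 ≤ w i) (hne : w ≠ 0) (i : Fin n) : 0 < tau w i :=
  inv_pos.mpr (sum_Iic_pos hmono hnonneg hne i)

lemma atomVec_antitone {n : ℕ} {w : Fin n → ℝ} (hmono : Antitone w)
    (hnonneg : ∀ i, 0 ≤ w i) (hne : w ≠ 0) (i : Fin n) : Antitone (atomVec w i) := by
  intro a b hab
  by_cases hb : b ≤ i
  · simp [atomVec, hb, hab.trans hb]
  · show (if b ≤ i then tau w i else 0) ≤ (if a ≤ i then tau w i else 0)
    rw [if_neg hb]
    split
    · exact (tau_pos hmono hnonneg hne i).le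
    · exact le_rfl

lemma owl_atomVec {n : ℕ} {w : Fin n → ℝ} (hmono : Antitone w)
    (hnonneg : ∀ i, 0 ≤ w i) (hne : w ≠ 0) (i : Fin n) : owl w (atomVec w i) = 1 := by
  have h0 : ∀ j, 0 ≤ atomVec w i j := by
    intro j
    show 0 ≤ if j ≤ i then tau w i else 0
    split
    · exact (tau_pos hmono hnonneg hne i).le
    · exact le_rfl
  unfold owl
  rw [absSorted_of_antitone (atomVec_antitone hmono hnonneg hne i) h0]
  have : ∀ j, w j * atomVec w i j = if j ∈ Finset.Iic i then w j * tau w i else 0 := by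
    intro j; by_cases h : j ≤ i <;> simp [atomVec, h, Finset.mem_Iic]
  rw [Finset.sum_congr rfl fun j _ => this j, Finset.sum_ite_mem, Finset.univ_inter,
    ← Finset.sum_mul]
  exact mul_inv_cancel₀ (sum_Iic_pos hmono hnonneg hne i).ne'

lemma owl_atom {n : ℕ} {w : Fin n → ℝ} (hmono : Antitone w)
    (hnonneg : ∀ i, 0 ≤ w i) (hne : w ≠ 0) {a : Fin n → ℝ} (ha : a ∈ atomSet w) :
    owl w a = 1 := by
  obtain ⟨σ, s, i, hs, rfl⟩ := ha
  rw [owl_eq_owl' w hmono, owl'_signperm w σ s hs, ← owl_eq_owl' w hmono]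
  exact owl_atomVec hmono hnonneg hne i

lemma owl_le_one_of_mem_hull {n : ℕ} {w : Fin n → ℝ} (hmono : Antitone w)
    (hnonneg : ∀ i, 0 ≤ w i) (hne : w ≠ 0) {y : Fin n → ℝ}
    (hy : y ∈ convexHull ℝ (atomSet w)) : owl w y ≤ 1 := by
  rw [owl_eq_owl' w hmono]
  have hsub : convexHull ℝ (atomSet w) ⊆ {y | owl' w y ≤ 1} := by
    apply convexHull_min
    · intro a ha
      have := owl_atom hmono hnonneg hne ha
      rw [owl_eq_owl' w hmono] at this
      exact le_of_eq this
    · intro u hu v hv a b ha hb hab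
      have h1 : owl' w (a • u + b • v) ≤ owl' w (a • u) + owl' w (b • v) :=
        owl'_add_le w hnonneg _ _
      rw [owl'_smul w u ha, owl'_smul w v hb] at h1
      calc owl' w (a • u + b • v) ≤ a * owl' w u + b * owl' w v := h1
        _ ≤ a * 1 + b * 1 := by
            exact add_le_add (mul_le_mul_of_nonneg_left hu ha)
              (mul_le_mul_of_nonneg_left hv hb)
        _ = 1 := by rw [mul_one, mul_one, hab]
  exact hsub hy

lemma owl_zero {n : ℕ} (w : Fin n → ℝ) : owl w 0 = 0 := by
  simp [owl, absSorted]

lemma owl_nonneg {n : ℕ} (w : Fin n → ℝ) (hnonneg : ∀ i, 0 ≤ w i) (x : Fin n → ℝ) :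
    0 ≤ owl w x :=
  Finset.sum_nonneg fun i _ => mul_nonneg (hnonneg i) (absSorted_nonneg x i)

lemma owl_pos {n : ℕ} {w : Fin n → ℝ} (hmono : Antitone w)
    (hnonneg : ∀ i, 0 ≤ w i) (hne : w ≠ 0) {x : Fin n → ℝ} (hx : x ≠ 0) :
    0 < owl w x := by
  obtain ⟨j, hj⟩ : ∃ j, x j ≠ 0 := by
    by_contra h; push_neg at h; exact hx (funext h)
  set z : Fin n := ⟨0, Nat.pos_of_ne_zero (by rintro rfl; exact j.elim0)⟩ with hz
  obtain ⟨k, hk⟩ : ∃ k, w k ≠ 0 := by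
    by_contra h; push_neg at h; exact hne (funext h)
  have hwz : 0 < w z :=
    lt_of_lt_of_le ((hnonneg k).lt_of_ne (Ne.symm hk)) (hmono (by simp [Fin.le_def, hz]))
  have hgz : 0 < absSorted x z := by
    have h1 : absSorted x ((Tuple.sort (fun j => -|x j|)).symm j) = |x j| := by
      simp [absSorted]
    have h2 : absSorted x ((Tuple.sort (fun j => -|x j|)).symm j) ≤ absSorted x z :=
      absSorted_antitone x (by simp [Fin.le_def, hz])
    calc (0:ℝ) < |x j| := abs_pos.mpr hj
      _ ≤ absSorted x z := h1 ▸ h2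
  calc (0:ℝ) < w z * absSorted x z := mul_pos hwz hgz
    _ ≤ owl w x := Finset.single_le_sum
        (fun i _ => mul_nonneg (hnonneg i) (absSorted_nonneg x i)) (Finset.mem_univ z)

lemma sum_Ici_val {n : ℕ} (F : ℕ → ℝ) (k : Fin n) :
    ∑ i ∈ Finset.Ici k, F i.1 = ∑ m ∈ Finset.Ico k.1 n, F m := by
  have h1 : ∑ i ∈ Finset.Ici k, F i.1 = ∑ i : Fin n, if k.1 ≤ i.1 then F i.1 else 0 := by
    rw [← Finset.sum_filter]
    apply Finset.sum_congr
    · ext i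
      simp only [Finset.mem_Ici, Finset.mem_filter, Finset.mem_univ, true_and, Fin.le_def]
    · intros; rfl
  rw [h1]
  rw [Fin.sum_univ_eq_sum_range (fun m => if k.1 ≤ m then F m else 0)]
  rw [← Finset.sum_filter]
  congr 1
  ext m
  simp only [Finset.mem_filter, Finset.mem_range, Finset.mem_Ico]
  tauto

lemma telescope_Ici {n : ℕ} (G : ℕ → ℝ) (hGn : G n = 0) (k : Fin n) :
    ∑ i ∈ Finset.Ici k, (G i.1 - G (i.1 + 1)) = G k.1 := by
  rw [sum_Ici_val (fun m => G m - G (m + 1)) k,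
    Finset.sum_Ico_eq_sub _ k.2.le, Finset.sum_range_sub' G, Finset.sum_range_sub' G, hGn]
  ring

lemma sum_Iic_swap {n : ℕ} (f : Fin n → Fin n → ℝ) :
    ∑ i, ∑ j ∈ Finset.Iic i, f i j = ∑ j, ∑ i ∈ Finset.Ici j, f i j := by
  have h1 : ∀ i : Fin n, ∑ j ∈ Finset.Iic i, f i j = ∑ j, if j ≤ i then f i j else 0 := by
    intro i
    rw [← Finset.sum_filter]
    apply Finset.sum_congr
    · ext j; simp
    · intros; rfl
  have h2 : ∀ j : Fin n, ∑ i ∈ Finset.Ici j, f i j = ∑ i, if j ≤ i then f i j else 0 := by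
    intro j
    rw [← Finset.sum_filter]
    apply Finset.sum_congr
    · ext i; simp
    · intros; rfl
  simp only [h1, h2]
  exact Finset.sum_comm

lemma owl_decomposition {n : ℕ} {w : Fin n → ℝ} (hmono : Antitone w)
    (hnonneg : ∀ i, 0 ≤ w i) (hne : w ≠ 0) (x : Fin n → ℝ) :
    ∃ (c : Fin n → ℝ) (a : Fin n → Fin n → ℝ),
      (∀ i, 0 ≤ c i) ∧ (∀ i, a i ∈ atomSet w) ∧
      (∑ i, c i = owl w x) ∧ ((∑ i, c i • a i) = x) := by
  set ρ : Equiv.Perm (Fin n) := Tuple.sort (fun j => -|x j|) with hρ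
  set g : Fin n → ℝ := absSorted x with hg
  set G : ℕ → ℝ := fun m => if h : m < n then g ⟨m, h⟩ else 0 with hGdef
  set W : Fin n → ℝ := fun i => ∑ j ∈ Finset.Iic i, w j with hW
  set s : Fin n → ℝ := fun j => if 0 ≤ x j then 1 else -1 with hs
  refine ⟨fun i => (G i.1 - G (i.1 + 1)) * W i,
    fun i j => s j * atomVec w i (ρ.symm j), ?_, ?_, ?_, ?_⟩
  · -- nonneg
    intro i
    apply mul_nonneg _ (sum_Iic_pos hmono hnonneg hne i).le
    have : G (i.1 + 1) ≤ G i.1 := by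
      by_cases h : i.1 + 1 < n
      · simp only [hGdef, dif_pos h, dif_pos i.2]
        exact absSorted_antitone x (by simp [Fin.le_def])
      · simp only [hGdef, dif_neg h, dif_pos i.2]
        exact absSorted_nonneg x _
    linarith
  · -- membership
    intro i
    exact ⟨ρ.symm, s, i, fun j => by by_cases h : 0 ≤ x j <;> simp [hs, h], rfl⟩
  · -- total mass
    have hGv : ∀ i : Fin n, G i.1 = g i := by
      intro i; simp only [hGdef, dif_pos i.2]
    calc ∑ i, (G i.1 - G (i.1 + 1)) * W i
        = ∑ i, ∑ j ∈ Finset.Iic i, (G i.1 - G (i.1 + 1)) * w j := by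
          simp only [hW, Finset.mul_sum]
      _ = ∑ j, ∑ i ∈ Finset.Ici j, (G i.1 - G (i.1 + 1)) * w j :=
          sum_Iic_swap _
      _ = ∑ j, (∑ i ∈ Finset.Ici j, (G i.1 - G (i.1 + 1))) * w j := by
          simp only [Finset.sum_mul]
      _ = ∑ j, G j.1 * w j := by
          refine Finset.sum_congr rfl fun j _ => ?_
          rw [telescope_Ici G (by simp [hGdef]) j]
      _ = owl w x := by
          refine Finset.sum_congr rfl fun j _ => ?_
          rw [hGv j, mul_comm]
  · -- vector identity
    funext j
    have hτ : ∀ i, (G i.1 - G (i.1 + 1)) * W i * tau w i = G i.1 - G (i.1 + 1) := by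
      intro i
      rw [mul_assoc]
      have : W i * tau w i = 1 := mul_inv_cancel₀ (sum_Iic_pos hmono hnonneg hne i).ne'
      rw [this, mul_one]
    have hsum : ∑ i, (G i.1 - G (i.1 + 1)) * W i * atomVec w i (ρ.symm j) = |x j| := by
      have h1 : ∀ i, (G i.1 - G (i.1 + 1)) * W i * atomVec w i (ρ.symm j)
          = if ρ.symm j ≤ i then G i.1 - G (i.1 + 1) else 0 := by
        intro i
        by_cases h : ρ.symm j ≤ i
        · rw [if_pos h]
          show _ * (if ρ.symm j ≤ i then tau w i else 0) = _
          rw [if_pos h, hτ]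
        · rw [if_neg h]
          show _ * (if ρ.symm j ≤ i then tau w i else 0) = _
          rw [if_neg h, mul_zero]
      simp only [h1]
      have h2 : ∑ i, (if ρ.symm j ≤ i then G i.1 - G (i.1 + 1) else 0)
          = ∑ i ∈ Finset.Ici (ρ.symm j), (G i.1 - G (i.1 + 1)) := by
        rw [← Finset.sum_filter]
        apply Finset.sum_congr
        · ext i; simp
        · intros; rfl
      rw [h2, telescope_Ici G (by simp [hGdef]) (ρ.symm j)]
      simp only [hGdef, dif_pos (ρ.symm j).2]
      show g ⟨(ρ.symm j).1, _⟩ = |x j|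
      have : g (ρ.symm j) = |x (ρ (ρ.symm j))| := rfl
      rw [Fin.eta, this, Equiv.apply_symm_apply]
    have : (∑ i, ((G i.1 - G (i.1 + 1)) * W i) • fun j => s j * atomVec w i (ρ.symm j)) j
        = ∑ i, (G i.1 - G (i.1 + 1)) * W i * (s j * atomVec w i (ρ.symm j)) := by
      simp [Finset.sum_apply]
    rw [this]
    have : ∑ i, (G i.1 - G (i.1 + 1)) * W i * (s j * atomVec w i (ρ.symm j))
        = s j * ∑ i, (G i.1 - G (i.1 + 1)) * W i * atomVec w i (ρ.symm j) := by
      rw [Finset.mul_sum]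
      exact Finset.sum_congr rfl fun i _ => by ring
    rw [this, hsum]
    by_cases h : 0 ≤ x j
    · simp [hs, h, abs_of_nonneg h]
    · push_neg at h
      simp [hs, not_le.mpr h, abs_of_neg h]

/-- Atomic formulation of the OWL norm: the gauge of the convex hull of the atomic
set A equals Omega_w. -/
theorem owl_atomic_formulation {n : ℕ} (w : Fin n → ℝ) (hmono : Antitone w)
    (hnonneg : ∀ i, 0 ≤ w i) (hne : w ≠ 0) (x : Fin n → ℝ) :
    sInf {t : ℝ | 0 ≤ t ∧ x ∈ t • convexHull ℝ (atomSet w)} = owl w x := by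
  rcases Nat.eq_zero_or_pos n with h0 | hn
  · subst h0
    exact absurd (funext fun j => j.elim0) hne
  -- the atom set is nonempty
  have hAne : (atomSet w).Nonempty := by
    refine ⟨fun j => (1:ℝ) * atomVec w ⟨0, hn⟩ ((1 : Equiv.Perm (Fin n)) j),
      1, fun _ => 1, ⟨0, hn⟩, fun j => Or.inl rfl, rfl⟩
  have hCne : (convexHull ℝ (atomSet w)).Nonempty := hAne.mono (subset_convexHull ℝ _)
  -- owl w x is a member of the defining set
  have hmem : owl w x ∈ {t : ℝ | 0 ≤ t ∧ x ∈ t • convexHull ℝ (atomSet w)} := by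
    refine ⟨owl_nonneg w hnonneg x, ?_⟩
    by_cases hx : x = 0
    · subst hx
      rw [owl_zero, Set.zero_smul_set hCne]
      exact Set.zero_mem_zero
    · have ht : 0 < owl w x := owl_pos hmono hnonneg hne hx
      obtain ⟨c, a, hc, ha, hcsum, hvec⟩ := owl_decomposition hmono hnonneg hne x
      have hcm : Finset.univ.centerMass c a ∈ convexHull ℝ (atomSet w) :=
        Finset.centerMass_mem_convexHull Finset.univ (fun i _ => hc i)
          (by rw [hcsum]; exact ht) (fun i _ => ha i)
      have hcmeq : Finset.univ.centerMass c a = (owl w x)⁻¹ • x := by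
        rw [Finset.centerMass, hcsum, hvec]
      rw [hcmeq] at hcm
      exact ⟨(owl w x)⁻¹ • x, hcm, by show owl w x • (owl w x)⁻¹ • x = x; rw [smul_inv_smul₀ ht.ne']⟩
  apply le_antisymm
  · exact csInf_le ⟨0, fun t ht => ht.1⟩ hmem
  · apply le_csInf ⟨owl w x, hmem⟩
    rintro t ⟨ht0, hxt⟩
    obtain ⟨y, hy, rfl⟩ := Set.mem_smul_set.mp hxt
    have h1 : owl' w y ≤ 1 := by
      have := owl_le_one_of_mem_hull hmono hnonneg hne hy
      rwa [owl_eq_owl' w hmono] at this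
    calc owl w (t • y) = owl' w (t • y) := owl_eq_owl' w hmono _
      _ = t * owl' w y := owl'_smul w y ht0
      _ ≤ t * 1 := mul_le_mul_of_nonneg_left h1 ht0
      _ = t := mul_one t
end

section
/- The proximity operator of the OWL norm commutes with sorting: prox_{Ω_w}(v) = sign(v) ⊙ (P(|v|)^T prox_{Ω_w}(|v|_↓)), where P(|v|) is a permutation matrix sorting |v| into non-increasing order |v|_↓. -/
open Finset

/-- The objective defining the proximity operator of Omega_w at v. -/
noncomputable def proxObj {n : ℕ} (w v x : Fin n → ℝ) : ℝ :=
  (1 / 2) * ∑ i, (x i - v i) ^ 2 + owl w x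

section Aux

variable {n : ℕ}

lemma absSorted_congr {x y : Fin n → ℝ} (h : ∀ i, |x i| = |y i|) :
    absSorted x = absSorted y := by
  have hf : (fun j => -|x j|) = fun j => -|y j| := funext fun j => by rw [h]
  funext i
  simp only [absSorted, hf, h]

lemma owl_congr (w : Fin n → ℝ) {x y : Fin n → ℝ} (h : ∀ i, |x i| = |y i|) :
    owl w x = owl w y := by
  unfold owl; rw [absSorted_congr h]

lemma absSorted_comp_perm (x : Fin n → ℝ) (σ : Equiv.Perm (Fin n)) :
    absSorted (x ∘ σ) = absSorted x := by
  funext i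
  have key := Tuple.comp_perm_comp_sort_eq_comp_sort (f := fun j => -|x j|) (σ := σ)
  have h1 : (fun j => -|(x ∘ σ) j|) = (fun j => -|x j|) ∘ σ := rfl
  have h2 := congrFun key i
  simp only [Function.comp] at h2
  simp only [absSorted, h1, Function.comp]
  exact neg_injective h2

lemma owl_comp_perm (w x : Fin n → ℝ) (σ : Equiv.Perm (Fin n)) :
    owl w (x ∘ σ) = owl w x := by
  unfold owl; rw [absSorted_comp_perm]

/-- Rearrangement bound: the sorted pairing maximizes the weighted sum. -/
lemma rearrange_le (w : Fin n → ℝ) (hmono : Antitone w) (x : Fin n → ℝ)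
    (π : Equiv.Perm (Fin n)) : ∑ i, w i * |x (π i)| ≤ owl w x := by
  set ρ := Tuple.sort (fun j => -|x j|) with hρ
  set g : Fin n → ℝ := fun i => |x (ρ i)| with hg
  have hant : Antitone g := by
    intro a b hab
    have := Tuple.monotone_sort (fun j => -|x j|) hab
    simp only [Function.comp] at this
    simpa [hg] using neg_le_neg_iff.mp this
  have hmv : Monovary w g := hmono.monovary hant
  have hkey := hmv.sum_smul_comp_perm_le_sum_smul (σ := π.trans ρ.symm)
  have h1 : ∀ i, g ((π.trans ρ.symm) i) = |x (π i)| := by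
    intro i; simp [hg, Equiv.trans_apply]
  have h2 : owl w x = ∑ i, w i * g i := rfl
  rw [h2]
  calc ∑ i, w i * |x (π i)| = ∑ i, w i • g ((π.trans ρ.symm) i) := by
        refine Finset.sum_congr rfl fun i _ => ?_
        rw [h1, smul_eq_mul]
    _ ≤ ∑ i, w i • g i := hkey
    _ = ∑ i, w i * g i := by simp [smul_eq_mul]

/-- Midpoint convexity of the OWL norm. -/
lemma owl_midpoint (w : Fin n → ℝ) (hmono : Antitone w) (hnonneg : ∀ i, 0 ≤ w i)
    (a b : Fin n → ℝ) :
    owl w (fun i => (a i + b i) / 2) ≤ owl w a / 2 + owl w b / 2 := by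
  set m : Fin n → ℝ := fun i => (a i + b i) / 2 with hm
  set ρ := Tuple.sort (fun j => -|m j|) with hρ
  have h0 : owl w m = ∑ i, w i * |m (ρ i)| := rfl
  have h1 : ∑ i, w i * |m (ρ i)| ≤ ∑ i, w i * (|a (ρ i)| / 2 + |b (ρ i)| / 2) := by
    refine Finset.sum_le_sum fun i _ => ?_
    refine mul_le_mul_of_nonneg_left ?_ (hnonneg i)
    simp only [hm]
    rw [abs_div, abs_two]
    linarith [abs_add_le (a (ρ i)) (b (ρ i))]
  have h2 : ∑ i, w i * (|a (ρ i)| / 2 + |b (ρ i)| / 2)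
      = (∑ i, w i * |a (ρ i)|) / 2 + (∑ i, w i * |b (ρ i)|) / 2 := by
    rw [Finset.sum_div, Finset.sum_div, ← Finset.sum_add_distrib]
    exact Finset.sum_congr rfl fun i _ => by ring
  have h3 : ∑ i, w i * |a (ρ i)| ≤ owl w a := rearrange_le w hmono a ρ
  have h4 : ∑ i, w i * |b (ρ i)| ≤ owl w b := rearrange_le w hmono b ρ
  show owl w m ≤ owl w a / 2 + owl w b / 2
  rw [h0]
  linarith [h1, h2, h3, h4]

/-- Strict convexity uniqueness: any point achieving the minimum equals the minimizer. -/
lemma minimizers_eq (w : Fin n → ℝ) (hmono : Antitone w) (hnonneg : ∀ i, 0 ≤ w i)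
    (v a b : Fin n → ℝ) (ha : ∀ x, proxObj w v a ≤ proxObj w v x)
    (hb : proxObj w v b ≤ proxObj w v a) : a = b := by
  set m : Fin n → ℝ := fun i => (a i + b i) / 2 with hm
  have hquad : ∑ i, (m i - v i) ^ 2
      = (∑ i, (a i - v i) ^ 2) / 2 + (∑ i, (b i - v i) ^ 2) / 2
        - (∑ i, (a i - b i) ^ 2) / 4 := by
    rw [Finset.sum_div, Finset.sum_div, Finset.sum_div, ← Finset.sum_add_distrib,
      ← Finset.sum_sub_distrib]
    refine Finset.sum_congr rfl fun i _ => ?_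
    simp only [hm]; ring
  have howl := owl_midpoint w hmono hnonneg a b
  have hmin := ha m
  have hS : ∑ i, (a i - b i) ^ 2 ≤ 0 := by
    unfold proxObj at hmin hb
    have howl' : owl w m ≤ owl w a / 2 + owl w b / 2 := howl
    linarith [hquad, howl', hmin, hb]
  have hS0 : ∑ i, (a i - b i) ^ 2 = 0 :=
    le_antisymm hS (Finset.sum_nonneg fun i _ => sq_nonneg _)
  funext i
  have := (Finset.sum_eq_zero_iff_of_nonneg (fun i _ => sq_nonneg _)).mp hS0 i (mem_univ i)
  have : a i - b i = 0 := by
    have h := pow_eq_zero_iff (n := 2) (by norm_num) |>.mp this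
    exact h
  linarith

/-- A minimizer vanishes wherever v vanishes. -/
lemma min_zero_at (w : Fin n → ℝ) (hmono : Antitone w) (hnonneg : ∀ i, 0 ≤ w i)
    (v a : Fin n → ℝ) (ha : ∀ x, proxObj w v a ≤ proxObj w v x) (i : Fin n)
    (hvi : v i = 0) : a i = 0 := by
  set b : Fin n → ℝ := Function.update a i (-(a i)) with hbdef
  have habs : ∀ j, |a j| = |b j| := by
    intro j
    by_cases h : j = i
    · subst h; simp [hbdef]
    · simp [hbdef, Function.update_of_ne h]
  have hb : proxObj w v b = proxObj w v a := by
    unfold proxObj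
    rw [owl_congr w habs]
    congr 1
    congr 1
    refine Finset.sum_congr rfl fun j _ => ?_
    by_cases h : j = i
    · subst h; simp [hbdef, hvi]
    · simp [hbdef, Function.update_of_ne h]
  have heq := minimizers_eq w hmono hnonneg v a b ha (le_of_eq hb)
  have h2 := congrFun heq i
  simp [hbdef] at h2
  linarith

lemma sign_sq_eq {c : ℝ} (hc : c ≠ 0) (x : ℝ) :
    (Real.sign c * x - c) ^ 2 = (x - |c|) ^ 2 := by
  rcases lt_or_gt_of_ne hc with h | h
  · rw [Real.sign_of_neg h, abs_of_neg h]; ring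
  · rw [Real.sign_of_pos h, abs_of_pos h]; ring

lemma sign_sq_eq' {c : ℝ} (hc : c ≠ 0) (x : ℝ) :
    (Real.sign c * x - |c|) ^ 2 = (x - c) ^ 2 := by
  rcases lt_or_gt_of_ne hc with h | h
  · rw [Real.sign_of_neg h, abs_of_neg h]; ring
  · rw [Real.sign_of_pos h, abs_of_pos h]; ring

lemma abs_sign_mul {c : ℝ} (hc : c ≠ 0) (x : ℝ) : |Real.sign c * x| = |x| := by
  rcases lt_or_gt_of_ne hc with h | h
  · rw [Real.sign_of_neg h]; simp
  · rw [Real.sign_of_pos h]; simp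

end Aux

/-- The proximity operator of the OWL norm commutes with sorting:
prox(v) = sign(v) ⊙ P(|v|)ᵀ prox(|v|↓), where the permutation σ sorts |v| into
non-increasing order. -/
theorem owl_prox_sort {n : ℕ} (w : Fin n → ℝ) (hmono : Antitone w)
    (hnonneg : ∀ i, 0 ≤ w i) (v p q : Fin n → ℝ) (σ : Equiv.Perm (Fin n))
    (hσ : Antitone fun i => |v (σ i)|)
    (hp : ∀ x, proxObj w v p ≤ proxObj w v x)
    (hq : ∀ x, proxObj w (fun i => |v (σ i)|) q ≤ proxObj w (fun i => |v (σ i)|) x) :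
    p = fun i => Real.sign (v i) * q (σ.symm i) := by
  set u : Fin n → ℝ := fun i => |v (σ i)| with hu
  have hq0 : ∀ i, u i = 0 → q i = 0 := fun i hi =>
    min_zero_at w hmono hnonneg u q hq i hi
  have hp0 : ∀ i, v i = 0 → p i = 0 := fun i hi =>
    min_zero_at w hmono hnonneg v p hp i hi
  set b : Fin n → ℝ := fun i => Real.sign (v i) * q (σ.symm i) with hb
  set Sp : Fin n → ℝ := fun i => Real.sign (v (σ i)) * p (σ i) with hSp
  -- proxObj w u Sp = proxObj w v p
  have hSpquad : ∑ i, (Sp i - u i) ^ 2 = ∑ i, (p i - v i) ^ 2 := by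
    rw [← Equiv.sum_comp σ (fun i => (p i - v i) ^ 2)]
    refine Finset.sum_congr rfl fun i _ => ?_
    by_cases h : v (σ i) = 0
    · simp [hSp, hu, h, Real.sign_zero, hp0 (σ i) h]
    · simp only [hSp, hu]
      exact sign_sq_eq' h (p (σ i))
  have hSpowl : owl w Sp = owl w p := by
    have habs : ∀ i, |Sp i| = |(p ∘ σ) i| := by
      intro i
      by_cases h : v (σ i) = 0
      · simp [hSp, h, Real.sign_zero, Function.comp, hp0 (σ i) h]
      · simp only [hSp, Function.comp]
        exact abs_sign_mul h (p (σ i))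
    rw [owl_congr w habs, owl_comp_perm]
  have hSpeq : proxObj w u Sp = proxObj w v p := by
    unfold proxObj; rw [hSpquad, hSpowl]
  -- proxObj w v b = proxObj w u q
  have hbquad : ∑ i, (b i - v i) ^ 2 = ∑ i, (q i - u i) ^ 2 := by
    rw [← Equiv.sum_comp σ (fun i => (b i - v i) ^ 2)]
    refine Finset.sum_congr rfl fun i _ => ?_
    by_cases h : v (σ i) = 0
    · have hqi : q i = 0 := hq0 i (by simp [hu, h])
      simp [hb, hu, h, Real.sign_zero, hqi]
    · simp only [hb, hu, Equiv.symm_apply_apply]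
      exact sign_sq_eq h (q i)
  have hbowl : owl w b = owl w q := by
    have habs : ∀ i, |b i| = |(q ∘ σ.symm) i| := by
      intro i
      by_cases h : v i = 0
      · have hqi : q (σ.symm i) = 0 := hq0 (σ.symm i) (by simp [hu, h])
        simp [hb, h, Real.sign_zero, Function.comp, hqi]
      · simp only [hb, Function.comp]
        exact abs_sign_mul h (q (σ.symm i))
    rw [owl_congr w habs, owl_comp_perm]
  have hbeq : proxObj w v b = proxObj w u q := by
    unfold proxObj; rw [hbquad, hbowl]
  -- chain
  have hchain : proxObj w v b ≤ proxObj w v p := by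
    calc proxObj w v b = proxObj w u q := hbeq
      _ ≤ proxObj w u Sp := hq Sp
      _ = proxObj w v p := hSpeq
  exact minimizers_eq w hmono hnonneg v p b hp hchain
end
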